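/- Let V₂(y) = |y|²/2 + 2η ln(1 + |y|²/2) on ℝ^d with η ≥ 0. Then the Hessian of V₂ satisfies, in the sense of quadratic forms, Hess V₂(y) ≥ (1 + 2η/(1+|y|²/2) − 2ηd|y|²/(1+|y|²/2)²) · Id for all y. -/

import Mathlib

open Real

noncomputable def innerB (d : ℕ) :
    EuclideanSpace ℝ (Fin d) →L[ℝ] EuclideanSpace ℝ (Fin d) →L[ℝ] ℝ := innerSL ℝ

@[simp] lemma innerB_apply {d : ℕ} (x u : EuclideanSpace ℝ (Fin d)) :
    innerB d x u = inner ℝ x u := rfl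

lemma heq_aux (η D n2y n2v a c : ℝ) (hc : c ≠ 0) :
    (1 + 2 * η / c) * n2v - 2 * η / c ^ 2 * a
      = (1 + 2 * η / c - 2 * η * D * n2y / c ^ 2) * n2v
        + 2 * η / c ^ 2 * (D * n2y * n2v - a) := by
  field_simp
  ring

set_option maxHeartbeats 1000000 in
theorem stmt_3 {d : ℕ} (hd : 1 ≤ d) (η : ℝ) (hη : 0 ≤ η)
    (V₂ : EuclideanSpace ℝ (Fin d) → ℝ)
    (hV : ∀ y, V₂ y = ‖y‖ ^ 2 / 2 + 2 * η * Real.log (1 + ‖y‖ ^ 2 / 2))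
    (y v : EuclideanSpace ℝ (Fin d)) :
    iteratedFDeriv ℝ 2 V₂ y ![v, v] ≥
      (1 + 2 * η / (1 + ‖y‖ ^ 2 / 2)
        - 2 * η * d * ‖y‖ ^ 2 / (1 + ‖y‖ ^ 2 / 2) ^ 2) * ‖v‖ ^ 2 := by
  have hVfun : V₂ = fun z => ‖z‖ ^ 2 / 2 + 2 * η * Real.log (1 + ‖z‖ ^ 2 / 2) :=
    funext hV
  have hcpos : ∀ s : ℝ, 0 ≤ s → (0:ℝ) < 1 + s / 2 := fun s hs => by linarith
  -- 1-d derivative facts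
  have h0 : ∀ s : ℝ, HasDerivAt (fun t : ℝ => 1 + t / 2) (1 / 2) s := by
    intro s
    simpa using ((hasDerivAt_id s).div_const 2).const_add 1
  set g : EuclideanSpace ℝ (Fin d) → EuclideanSpace ℝ (Fin d) →L[ℝ] ℝ :=
    fun z => (1 + 2 * η / (1 + ‖z‖ ^ 2 / 2)) • innerSL ℝ z with hgdef
  have hnormsq : ∀ z : EuclideanSpace ℝ (Fin d),
      HasFDerivAt (fun w : EuclideanSpace ℝ (Fin d) => ‖w‖ ^ 2) (2 • innerSL ℝ z) z :=
    fun z => (hasStrictFDerivAt_norm_sq z).hasFDerivAt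
  have hg : ∀ z, HasFDerivAt V₂ (g z) z := by
    intro z
    rw [hVfun]
    have hne : (1 + ‖z‖ ^ 2 / 2 : ℝ) ≠ 0 := (hcpos _ (sq_nonneg _)).ne'
    have hφ : HasDerivAt (fun t : ℝ => t / 2 + 2 * η * Real.log (1 + t / 2))
        (1 / 2 + 2 * η * ((1 + ‖z‖ ^ 2 / 2)⁻¹ * (1 / 2))) (‖z‖ ^ 2) := by
      have hlog : HasDerivAt (fun t : ℝ => Real.log (1 + t / 2))
          ((1 + ‖z‖ ^ 2 / 2)⁻¹ * (1 / 2)) (‖z‖ ^ 2) :=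
        by have := (Real.hasDerivAt_log hne).comp (‖z‖ ^ 2) (h0 (‖z‖ ^ 2)); exact this
      exact ((hasDerivAt_id _).div_const 2).add (hlog.const_mul (2 * η))
    have := hφ.comp_hasFDerivAt z (hnormsq z)
    refine HasFDerivAt.congr_fderiv this ?_
    ext u
    simp [hgdef, smul_smul]
    field_simp
  have hfd : fderiv ℝ V₂ = g := funext fun z => (hg z).fderiv
  have hc0 : (0:ℝ) < 1 + ‖y‖ ^ 2 / 2 := hcpos _ (sq_nonneg _)
  -- derivative of the scalar factor
  have hψ : HasDerivAt (fun t : ℝ => 1 + 2 * η / (1 + t / 2))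
      (2 * η * (-(1 / 2) / (1 + ‖y‖ ^ 2 / 2) ^ 2)) (‖y‖ ^ 2) := by
    have hinv : HasDerivAt (fun t : ℝ => (1 + t / 2)⁻¹)
        (-(1 / 2) / (1 + ‖y‖ ^ 2 / 2) ^ 2) (‖y‖ ^ 2) := (h0 _).inv hc0.ne'
    have := (hinv.const_mul (2 * η)).const_add 1
    simpa [div_eq_mul_inv] using this
  have hφy : HasFDerivAt (fun z : EuclideanSpace ℝ (Fin d) => 1 + 2 * η / (1 + ‖z‖ ^ 2 / 2))
      ((2 * η * (-(1 / 2) / (1 + ‖y‖ ^ 2 / 2) ^ 2)) • (2 • innerSL ℝ y)) y :=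
    by have := hψ.comp_hasFDerivAt y (hnormsq y); exact this
  have hι : HasFDerivAt (fun z : EuclideanSpace ℝ (Fin d) => innerSL ℝ z) (innerB d) y :=
    (innerB d).hasFDerivAt
  have hG : HasFDerivAt g
      ((1 + 2 * η / (1 + ‖y‖ ^ 2 / 2)) • innerB d +
        ((2 * η * (-(1 / 2) / (1 + ‖y‖ ^ 2 / 2) ^ 2)) • (2 • innerSL ℝ y)).smulRight
          (innerSL ℝ y)) y := hφy.smul hι
  have hval : iteratedFDeriv ℝ 2 V₂ y ![v, v]
      = (1 + 2 * η / (1 + ‖y‖ ^ 2 / 2)) * ‖v‖ ^ 2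
        - 2 * η / (1 + ‖y‖ ^ 2 / 2) ^ 2 * (inner ℝ y v : ℝ) ^ 2 := by
    rw [iteratedFDeriv_two_apply, hfd, hG.fderiv]
    simp only [Matrix.cons_val_zero, Matrix.cons_val_one, Matrix.head_cons,
      ContinuousLinearMap.add_apply, ContinuousLinearMap.smul_apply,
      ContinuousLinearMap.smulRight_apply, innerB_apply, innerSL_apply_apply,
      smul_eq_mul, real_inner_self_eq_norm_sq]
    ring
  rw [hval, ge_iff_le]
  have ha : (inner ℝ y v : ℝ) ^ 2 ≤ ‖y‖ ^ 2 * ‖v‖ ^ 2 := by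
    calc (inner ℝ y v : ℝ) ^ 2 = |(inner ℝ y v : ℝ)| ^ 2 := (sq_abs _).symm
      _ ≤ (‖y‖ * ‖v‖) ^ 2 := by
          exact pow_le_pow_left₀ (abs_nonneg _) (abs_real_inner_le_norm y v) 2
      _ = ‖y‖ ^ 2 * ‖v‖ ^ 2 := mul_pow _ _ 2
  have hd' : (1:ℝ) ≤ d := by exact_mod_cast hd
  have hnn : 0 ≤ 2 * η / (1 + ‖y‖ ^ 2 / 2) ^ 2
      * ((d:ℝ) * ‖y‖ ^ 2 * ‖v‖ ^ 2 - (inner ℝ y v : ℝ) ^ 2) := by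
    apply mul_nonneg (by positivity)
    nlinarith [sq_nonneg ‖y‖, sq_nonneg ‖v‖, mul_nonneg (sq_nonneg ‖y‖) (sq_nonneg ‖v‖)]
  have heq : (1 + 2 * η / (1 + ‖y‖ ^ 2 / 2)) * ‖v‖ ^ 2
        - 2 * η / (1 + ‖y‖ ^ 2 / 2) ^ 2 * (inner ℝ y v : ℝ) ^ 2
      = (1 + 2 * η / (1 + ‖y‖ ^ 2 / 2)
          - 2 * η * d * ‖y‖ ^ 2 / (1 + ‖y‖ ^ 2 / 2) ^ 2) * ‖v‖ ^ 2
        + 2 * η / (1 + ‖y‖ ^ 2 / 2) ^ 2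
          * ((d:ℝ) * ‖y‖ ^ 2 * ‖v‖ ^ 2 - (inner ℝ y v : ℝ) ^ 2) :=
    heq_aux η d (‖y‖ ^ 2) (‖v‖ ^ 2) ((inner ℝ y v : ℝ) ^ 2) _ hc0.ne'
  linarith [heq, hnn]
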